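/- The function f(U) = min over transportation plans π ∈ Π(μ,ν) of Trace(Uᵀ V_π U) is 2‖C‖_∞-weakly concave on ℝ^{d×k}; that is, U ↦ f(U) - ‖C‖_∞ ‖U‖_F² is concave. -/
import Mathlib


open Finset Matrix

private lemma quad_sum_identity {ι : Type*} (s : Finset ι) (u v : ι → ℝ) (a b : ℝ)
    (hab : a + b = 1) :
    ∑ i ∈ s, (a * u i + b * v i) ^ 2
      = a * ∑ i ∈ s, (u i) ^ 2 + b * ∑ i ∈ s, (v i) ^ 2 - a * b * ∑ i ∈ s, (u i - v i) ^ 2 := by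
  simp only [Finset.mul_sum, ← Finset.sum_add_distrib, ← Finset.sum_sub_distrib]
  exact Finset.sum_congr rfl fun i _ => by
    linear_combination (a * (u i) ^ 2 + b * (v i) ^ 2) * hab

private lemma trace_formula {n d k : ℕ} (x y : Fin n → Fin d → ℝ)
    (p : Matrix (Fin n) (Fin n) ℝ) (U : Matrix (Fin d) (Fin k) ℝ) :
    Matrix.trace (Uᵀ * (∑ i, ∑ j, p i j • Matrix.vecMulVec (x i - y j) (x i - y j)) * U)
      = ∑ i, ∑ j, p i j * ∑ b, (∑ l, (x i l - y j l) * U l b) ^ 2 := by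
  simp only [Matrix.mul_sum, Matrix.sum_mul, Matrix.trace_sum, Matrix.mul_smul,
    Matrix.smul_mul, Matrix.trace_smul, smul_eq_mul]
  refine Finset.sum_congr rfl fun i _ => Finset.sum_congr rfl fun j _ => ?_
  congr 1
  simp only [Matrix.trace, Matrix.diag, Matrix.mul_apply, Matrix.vecMulVec_apply,
    Matrix.transpose_apply, Pi.sub_apply, sq, Finset.sum_mul, Finset.mul_sum]
  refine Finset.sum_congr rfl fun b _ => ?_
  rw [Finset.sum_comm]
  exact Finset.sum_congr rfl fun m _ => Finset.sum_congr rfl fun l _ => by ring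

/-- `f(U) = min_{p ∈ Π(μ,ν)} Trace(Uᵀ V_p U)` is `2‖C‖_∞`-weakly concave, i.e.
`U ↦ f(U) - ‖C‖_∞‖U‖_F²` is concave on ℝ^{d×k}. -/
theorem f_weakly_concave {n d k : ℕ}
    (x y : Fin n → Fin d → ℝ) (r c : Fin n → ℝ)
    (hr : ∀ i, 0 ≤ r i) (hrs : ∑ i, r i = 1)
    (hc : ∀ j, 0 ≤ c j) (hcs : ∑ j, c j = 1)
    (Plans : Set (Matrix (Fin n) (Fin n) ℝ))
    (hPlans : Plans = {p | (∀ i j, 0 ≤ p i j) ∧ (∀ i, ∑ j, p i j = r i) ∧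
      (∀ j, ∑ i, p i j = c j)})
    (Cinf : ℝ) (hC : Cinf = ⨆ i, ⨆ j, ∑ l, (x i l - y j l) ^ 2)
    (f : Matrix (Fin d) (Fin k) ℝ → ℝ)
    (hf : ∀ U, f U = sInf ((fun p : Matrix (Fin n) (Fin n) ℝ =>
      Matrix.trace (Uᵀ * (∑ i, ∑ j, p i j • Matrix.vecMulVec (x i - y j) (x i - y j)) * U))
      '' Plans)) :
    ConcaveOn ℝ Set.univ (fun U : Matrix (Fin d) (Fin k) ℝ =>
      f U - Cinf * ∑ a, ∑ b, (U a b) ^ 2) := by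
  -- notation
  set Gf : Matrix (Fin n) (Fin n) ℝ → Matrix (Fin d) (Fin k) ℝ → ℝ :=
    fun p U => ∑ i, ∑ j, p i j * ∑ b, (∑ l, (x i l - y j l) * U l b) ^ 2 with hGf
  set N : Matrix (Fin d) (Fin k) ℝ → ℝ := fun U => ∑ a, ∑ b, (U a b) ^ 2 with hN
  -- f as sInf of Gf values
  have hf' : ∀ U, f U = sInf ((fun p => Gf p U) '' Plans) := by
    intro U
    rw [hf U]
    congr 1
    exact Set.image_congr fun p _ => trace_formula x y p U
  -- Plans is nonempty
  have hne : Plans.Nonempty := by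
    refine ⟨fun i j => r i * c j, ?_⟩
    rw [hPlans]
    refine ⟨fun i j => mul_nonneg (hr i) (hc j), fun i => ?_, fun j => ?_⟩
    · rw [← Finset.mul_sum, hcs, mul_one]
    · rw [← Finset.sum_mul, hrs, one_mul]
  -- Cinf bound
  have hCb : ∀ i j, ∑ l, (x i l - y j l) ^ 2 ≤ Cinf := by
    intro i j
    rw [hC]
    calc ∑ l, (x i l - y j l) ^ 2
        ≤ ⨆ j, ∑ l, (x i l - y j l) ^ 2 :=
          le_ciSup (f := fun j => ∑ l, (x i l - y j l) ^ 2)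
            (Set.Finite.bddAbove (Set.finite_range _)) j
      _ ≤ ⨆ i, ⨆ j, ∑ l, (x i l - y j l) ^ 2 :=
          le_ciSup (f := fun i => ⨆ j, ∑ l, (x i l - y j l) ^ 2)
            (Set.Finite.bddAbove (Set.finite_range _)) i
  -- nonnegativity of Gf on plans
  have hGnn : ∀ p ∈ Plans, ∀ U, 0 ≤ Gf p U := by
    intro p hp U
    rw [hPlans] at hp
    refine Finset.sum_nonneg fun i _ => Finset.sum_nonneg fun j _ =>
      mul_nonneg (hp.1 i j) (Finset.sum_nonneg fun b _ => sq_nonneg _)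
  -- key bound : Gf p U ≤ Cinf * N U for p ∈ Plans
  have hkey : ∀ p ∈ Plans, ∀ U, Gf p U ≤ Cinf * N U := by
    intro p hp U
    rw [hPlans] at hp
    have hNnn : 0 ≤ N U :=
      Finset.sum_nonneg fun a _ => Finset.sum_nonneg fun b _ => sq_nonneg _
    have hsum1 : ∑ i, ∑ j, p i j = 1 := by
      rw [Finset.sum_congr rfl fun i _ => hp.2.1 i, hrs]
    calc Gf p U ≤ ∑ i, ∑ j, p i j * (Cinf * N U) := by
          refine Finset.sum_le_sum fun i _ => Finset.sum_le_sum fun j _ =>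
            mul_le_mul_of_nonneg_left ?_ (hp.1 i j)
          calc ∑ b, (∑ l, (x i l - y j l) * U l b) ^ 2
              ≤ ∑ b, (∑ l, (x i l - y j l) ^ 2) * (∑ l, (U l b) ^ 2) := by
                refine Finset.sum_le_sum fun b _ => ?_
                exact Finset.sum_mul_sq_le_sq_mul_sq _ _ _
            _ ≤ ∑ b, Cinf * (∑ l, (U l b) ^ 2) := by
                refine Finset.sum_le_sum fun b _ => ?_
                exact mul_le_mul_of_nonneg_right (hCb i j)
                  (Finset.sum_nonneg fun l _ => sq_nonneg _)
            _ = Cinf * N U := by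
                rw [← Finset.mul_sum, hN]; rw [Finset.sum_comm]
      _ = Cinf * N U := by
          simp only [← Finset.sum_mul]
          rw [hsum1, one_mul]
  -- concavity
  refine ⟨convex_univ, fun U _ V _ a b ha hb hab => ?_⟩
  simp only [smul_eq_mul]
  set W : Matrix (Fin d) (Fin k) ℝ := a • U + b • V with hW
  have hWab : ∀ l bb, W l bb = a * U l bb + b * V l bb := by
    intro l bb; simp [hW, Matrix.add_apply, Matrix.smul_apply, smul_eq_mul]
  -- identity for N
  have hNid : N W = a * N U + b * N V - a * b * N (U - V) := by
    simp only [hN]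
    rw [← Finset.sum_product', ← Finset.sum_product', ← Finset.sum_product',
      ← Finset.sum_product']
    have := quad_sum_identity (Finset.univ : Finset (Fin d × Fin k))
      (fun q : Fin d × Fin k => U q.1 q.2) (fun q => V q.1 q.2) a b hab
    simpa [hWab, Matrix.sub_apply] using this
  -- identity for Gf
  have hGid : ∀ p, Gf p W = a * Gf p U + b * Gf p V - a * b * Gf p (U - V) := by
    intro p
    simp only [hGf, Finset.mul_sum, ← Finset.sum_sub_distrib, ← Finset.sum_add_distrib]
    refine Finset.sum_congr rfl fun i _ => Finset.sum_congr rfl fun j _ => ?_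
    have hv : ∀ bb, ∑ l, (x i l - y j l) * W l bb
        = a * (∑ l, (x i l - y j l) * U l bb) + b * (∑ l, (x i l - y j l) * V l bb) := by
      intro bb
      rw [Finset.mul_sum, Finset.mul_sum, ← Finset.sum_add_distrib]
      refine Finset.sum_congr rfl fun l _ => ?_
      rw [hWab]; ring
    have hv2 : ∀ bb, ∑ l, (x i l - y j l) * (U - V) l bb
        = (∑ l, (x i l - y j l) * U l bb) - (∑ l, (x i l - y j l) * V l bb) := by
      intro bb
      simp only [Matrix.sub_apply, mul_sub, Finset.sum_sub_distrib]
    simp only [hv, hv2]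
    refine Finset.sum_congr rfl fun bb _ => ?_
    linear_combination (p i j * (a * (∑ l, (x i l - y j l) * U l bb) ^ 2 +
      b * (∑ l, (x i l - y j l) * V l bb) ^ 2)) * hab
  -- bounded-below and nonempty images
  have hbdd : ∀ X : Matrix (Fin d) (Fin k) ℝ, BddBelow ((fun p => Gf p X) '' Plans) := by
    intro X
    exact ⟨0, fun z hz => by
      obtain ⟨p, hp, rfl⟩ := hz
      exact hGnn p hp X⟩
  have hfle : ∀ (X : Matrix (Fin d) (Fin k) ℝ) (p) (_ : p ∈ Plans), f X ≤ Gf p X := by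
    intro X p hp
    rw [hf' X]
    exact csInf_le (hbdd X) ⟨p, hp, rfl⟩
  -- final inequality
  have hgoal : a * (f U - Cinf * N U) + b * (f V - Cinf * N V) + Cinf * N W ≤ f W := by
    rw [hf' W]
    refine le_csInf (hne.image _) ?_
    rintro z ⟨p, hp, rfl⟩
    show a * (f U - Cinf * N U) + b * (f V - Cinf * N V) + Cinf * N W ≤ Gf p W
    have h1a : a * f U ≤ a * Gf p U :=
      mul_le_mul_of_nonneg_left (hfle U p hp) ha
    have h2b : b * f V ≤ b * Gf p V :=
      mul_le_mul_of_nonneg_left (hfle V p hp) hb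
    have h4 := hGid p
    have h5 : a * b * Gf p (U - V) ≤ a * b * (Cinf * N (U - V)) :=
      mul_le_mul_of_nonneg_left (hkey p hp (U - V)) (mul_nonneg ha hb)
    have h7 : Cinf * N W = a * (Cinf * N U) + b * (Cinf * N V)
        - a * b * (Cinf * N (U - V)) := by rw [hNid]; ring
    linarith [h1a, h2b, h4, h5, h7]
  linarith [hgoal]
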